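/- Let T, A be bounded linear operators on a complex Hilbert space H. Suppose ‖T‖ ≤ ‖T - μA‖ for all complex μ (minimal-norm translation of T in the direction of A is T itself). Suppose {fₙ} is a sequence of unit vectors with ‖Tfₙ‖ → ‖T‖ and (Tfₙ, Afₙ)/(Afₙ, Afₙ) → 0 (with Afₙ ≠ 0), and fₙ ⇀ f weakly with f ≠ 0. Then ‖Tf‖²/‖f‖² = ‖T‖². -/

import Mathlib

open scoped InnerProductSpace
open Filter

/-- core step in Theorem 3 of the paper. -/
theorem stmt_9 {H : Type*} [NormedAddCommGroup H] [InnerProductSpace ℂ H] [CompleteSpace H]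
    (T A : H →L[ℂ] H)
    (c : ℝ) (hc : 0 < c) (hA : ∀ x : H, c * ‖x‖ ≤ ‖A x‖)
    (hmin : ∀ μ : ℂ, ‖T‖ ≤ ‖T - μ • A‖)
    (f : ℕ → H) (hf : ∀ n, ‖f n‖ = 1)
    (hnorm : Tendsto (fun n => ‖T (f n)‖) atTop (nhds ‖T‖))
    (hlam : Tendsto (fun n => ⟪A (f n), T (f n)⟫_ℂ / ⟪A (f n), A (f n)⟫_ℂ) atTop (nhds 0))
    (g : H) (hg : g ≠ 0)
    (hweak : ∀ y : H, Tendsto (fun n => ⟪y, f n⟫_ℂ) atTop (nhds ⟪y, g⟫_ℂ)) :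
    ‖T g‖ ^ 2 / ‖g‖ ^ 2 = ‖T‖ ^ 2 := by
  have hgpos : (0:ℝ) < ‖g‖ := norm_pos_iff.mpr hg
  have hTg_le : ‖T g‖ ≤ ‖T‖ * ‖g‖ := T.le_opNorm g
  have hre : ∀ y : H, Tendsto (fun n => (⟪y, f n⟫_ℂ).re) atTop (nhds (⟪y, g⟫_ℂ).re) :=
    fun y => (Complex.continuous_re.tendsto _).comp (hweak y)
  have h1 : Tendsto (fun n => (⟪g, f n⟫_ℂ).re) atTop (nhds (‖g‖^2)) := by
    have := hre g
    rwa [show (⟪g, g⟫_ℂ).re = ‖g‖^2 from by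
      simpa using (inner_self_eq_norm_sq (𝕜 := ℂ) g)] at this
  have hadj : ∀ x : H, ⟪ContinuousLinearMap.adjoint T (T g), x⟫_ℂ = ⟪T g, T x⟫_ℂ :=
    fun x => ContinuousLinearMap.adjoint_inner_left T x (T g)
  have h2 : Tendsto (fun n => (⟪T g, T (f n)⟫_ℂ).re) atTop (nhds (‖T g‖^2)) := by
    have := hre (ContinuousLinearMap.adjoint T (T g))
    simp only [hadj] at this
    rwa [show (⟪T g, T g⟫_ℂ).re = ‖T g‖^2 from by
      simpa using (inner_self_eq_norm_sq (𝕜 := ℂ) (T g))] at this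
  have hT2 : Tendsto (fun n => ‖T (f n)‖^2) atTop (nhds (‖T‖^2)) := hnorm.pow 2
  -- norm of difference expansions
  have exp1 : ∀ n, ‖T (f n) - T g‖^2
      = ‖T (f n)‖^2 - 2 * (⟪T g, T (f n)⟫_ℂ).re + ‖T g‖^2 := by
    intro n
    have := @norm_sub_sq ℂ _ _ _ _ (T (f n)) (T g)
    rw [inner_re_symm] at this
    simpa using this
  have exp2 : ∀ n, ‖f n - g‖^2 = 1 - 2 * (⟪g, f n⟫_ℂ).re + ‖g‖^2 := by
    intro n
    have := @norm_sub_sq ℂ _ _ _ _ (f n) g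
    rw [inner_re_symm] at this
    simpa [hf n] using this
  have hu : Tendsto (fun n => ‖T (f n) - T g‖^2) atTop
      (nhds (‖T‖^2 - 2 * ‖T g‖^2 + ‖T g‖^2)) := by
    have h := (hT2.sub ((h2.const_mul 2))).add (tendsto_const_nhds (x := ‖T g‖^2))
    exact Tendsto.congr (fun n => (exp1 n).symm) (by simpa [mul_comm] using h)
  have hv : Tendsto (fun n => ‖T‖^2 * ‖f n - g‖^2) atTop
      (nhds (‖T‖^2 * (1 - 2 * ‖g‖^2 + ‖g‖^2))) := by
    have h := ((tendsto_const_nhds (x := (1:ℝ))).sub (h1.const_mul 2)).add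
      (tendsto_const_nhds (x := ‖g‖^2))
    have h' := h.const_mul (‖T‖^2)
    exact Tendsto.congr (fun n => by rw [exp2 n]) (by simpa [mul_comm] using h')
  have key : ‖T‖^2 - 2 * ‖T g‖^2 + ‖T g‖^2 ≤ ‖T‖^2 * (1 - 2 * ‖g‖^2 + ‖g‖^2) := by
    refine le_of_tendsto_of_tendsto' hu hv (fun n => ?_)
    have h := T.le_opNorm (f n - g)
    rw [map_sub] at h
    have hsq := pow_le_pow_left₀ (norm_nonneg _) h 2
    simpa [mul_pow] using hsq
  have hsq : ‖T g‖^2 ≤ ‖T‖^2 * ‖g‖^2 := by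
    have := pow_le_pow_left₀ (norm_nonneg (T g)) hTg_le 2
    simpa [mul_pow] using this
  have heq : ‖T g‖^2 = ‖T‖^2 * ‖g‖^2 := le_antisymm hsq (by nlinarith [key])
  field_simp [heq]
  linarith [heq]
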